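/- arXiv:2505.13796 — 4 statements merged into one kernel-verified Lean document; each statement's English description precedes it below -/
import Mathlib

section
/- For real numbers $w, d, t$ with $w \geq d \geq 1$ and $0 \leq t \leq d/4$, one has $(w + 2t)(w + 2t - 1)(w - t + 1)^2 \leq (w + d/2 + 1/2)^3 (w - d/2 + 3/2)$. -/
theorem stmt_4 (w d t : ℝ) (hwd : d ≤ w) (hd : 1 ≤ d) (ht0 : 0 ≤ t) (htd : t ≤ d / 4) :
    (w + 2 * t) * (w + 2 * t - 1) * (w - t + 1) ^ 2
      ≤ (w + d / 2 + 1 / 2) ^ 3 * (w - d / 2 + 3 / 2) := by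
  nlinarith [sq_nonneg (d - 4*t), sq_nonneg (d + 4*t), mul_nonneg ht0 (sub_nonneg.2 htd), sq_nonneg (w - d), mul_nonneg (sub_nonneg.2 hwd) (sub_nonneg.2 htd), mul_nonneg (mul_nonneg (sub_nonneg.2 hwd) (sub_nonneg.2 htd)) ht0, sq_nonneg (w + 1), mul_nonneg (sub_nonneg.2 hwd) ht0, sq_nonneg (d/4 - t), mul_nonneg (mul_nonneg (sub_nonneg.2 hwd) (sub_nonneg.2 hwd)) (sub_nonneg.2 htd), mul_nonneg (mul_nonneg (sub_nonneg.2 hwd) (sub_nonneg.2 hwd)) ht0]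
end

section
/- For natural numbers $w \geq d \geq j \geq 0$ with $d \geq 1$, one has $\binom{w}{j}\binom{w + d - 2j}{d - j} \leq \frac{(w + d/2 + 1/2)^{d-j}\,(w - d/2 + 3/2)^{j}}{j!\,(d-j)!}$, where the right-hand side is interpreted as a real number. -/
private lemma bern2 (x : ℝ) (hx : 0 ≤ x) (k : ℕ) :
    1 + (k : ℝ) * x + (k : ℝ) * ((k : ℝ) - 1) / 2 * x ^ 2 ≤ (1 + x) ^ k := by
  induction k with
  | zero => norm_num
  | succ n ih =>
    have h1 : (0:ℝ) ≤ 1 + x := by linarith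
    have hn : (0:ℝ) ≤ (n:ℝ) * ((n:ℝ) - 1) := by
      rcases Nat.eq_zero_or_pos n with h | h
      · simp [h]
      · have : (1:ℝ) ≤ (n:ℝ) := by exact_mod_cast h
        nlinarith
    have h2 : (1 + (n:ℝ)*x + (n:ℝ)*((n:ℝ)-1)/2*x^2) * (1+x) ≤ (1+x)^n * (1+x) :=
      mul_le_mul_of_nonneg_right ih h1
    have h3 : 1 + ((n:ℕ)+1 : ℝ) * x + ((n:ℕ)+1 : ℝ) * (((n:ℕ)+1 : ℝ) - 1) / 2 * x ^ 2
        ≤ (1 + (n:ℝ)*x + (n:ℝ)*((n:ℝ)-1)/2*x^2) * (1+x) := by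
      nlinarith [mul_nonneg hn (mul_nonneg (mul_nonneg hx hx) hx)]
    calc 1 + ((n+1 : ℕ) : ℝ) * x + ((n+1 : ℕ) : ℝ) * (((n+1 : ℕ) : ℝ) - 1) / 2 * x ^ 2
        ≤ (1 + (n:ℝ)*x + (n:ℝ)*((n:ℝ)-1)/2*x^2) * (1+x) := by push_cast; push_cast at h3; linarith
      _ ≤ (1+x)^n * (1+x) := h2
      _ = (1+x)^(n+1) := by ring

private lemma R2lem (u i k : ℝ) (hu : 0 ≤ u) (hi : 0 ≤ i) (hk : 0 ≤ k) :
    (u+i+k+2) * (u+2*k+2) * (u+3*(i+k)/2+3/2)^2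
      ≤ (u+3*(i+k)/2+7/2) * (u+(i+k)/2+5/2)
        * ((u+3*(i+k)/2+3/2)^2 + 2*k*(u+3*(i+k)/2+3/2) + 2*k*(k-1)) := by
  nlinarith [mul_nonneg (mul_nonneg (pow_nonneg hu 0) (pow_nonneg hi 0)) (pow_nonneg hk 0),
  mul_nonneg (mul_nonneg (pow_nonneg hu 0) (pow_nonneg hi 0)) (pow_nonneg hk 1),
  mul_nonneg (mul_nonneg (pow_nonneg hu 0) (pow_nonneg hi 0)) (pow_nonneg hk 2),
  mul_nonneg (mul_nonneg (pow_nonneg hu 0) (pow_nonneg hi 0)) (pow_nonneg hk 3),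
  mul_nonneg (mul_nonneg (pow_nonneg hu 0) (pow_nonneg hi 0)) (pow_nonneg hk 4),
  mul_nonneg (mul_nonneg (pow_nonneg hu 0) (pow_nonneg hi 1)) (pow_nonneg hk 0),
  mul_nonneg (mul_nonneg (pow_nonneg hu 0) (pow_nonneg hi 1)) (pow_nonneg hk 1),
  mul_nonneg (mul_nonneg (pow_nonneg hu 0) (pow_nonneg hi 1)) (pow_nonneg hk 2),
  mul_nonneg (mul_nonneg (pow_nonneg hu 0) (pow_nonneg hi 1)) (pow_nonneg hk 3),
  mul_nonneg (mul_nonneg (pow_nonneg hu 0) (pow_nonneg hi 2)) (pow_nonneg hk 0),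
  mul_nonneg (mul_nonneg (pow_nonneg hu 0) (pow_nonneg hi 2)) (pow_nonneg hk 1),
  mul_nonneg (mul_nonneg (pow_nonneg hu 0) (pow_nonneg hi 2)) (pow_nonneg hk 2),
  mul_nonneg (mul_nonneg (pow_nonneg hu 0) (pow_nonneg hi 3)) (pow_nonneg hk 0),
  mul_nonneg (mul_nonneg (pow_nonneg hu 0) (pow_nonneg hi 3)) (pow_nonneg hk 1),
  mul_nonneg (mul_nonneg (pow_nonneg hu 0) (pow_nonneg hi 4)) (pow_nonneg hk 0),
  mul_nonneg (mul_nonneg (pow_nonneg hu 1) (pow_nonneg hi 0)) (pow_nonneg hk 0),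
  mul_nonneg (mul_nonneg (pow_nonneg hu 1) (pow_nonneg hi 0)) (pow_nonneg hk 1),
  mul_nonneg (mul_nonneg (pow_nonneg hu 1) (pow_nonneg hi 0)) (pow_nonneg hk 2),
  mul_nonneg (mul_nonneg (pow_nonneg hu 1) (pow_nonneg hi 0)) (pow_nonneg hk 3),
  mul_nonneg (mul_nonneg (pow_nonneg hu 1) (pow_nonneg hi 1)) (pow_nonneg hk 0),
  mul_nonneg (mul_nonneg (pow_nonneg hu 1) (pow_nonneg hi 1)) (pow_nonneg hk 1),
  mul_nonneg (mul_nonneg (pow_nonneg hu 1) (pow_nonneg hi 1)) (pow_nonneg hk 2),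
  mul_nonneg (mul_nonneg (pow_nonneg hu 1) (pow_nonneg hi 2)) (pow_nonneg hk 0),
  mul_nonneg (mul_nonneg (pow_nonneg hu 1) (pow_nonneg hi 2)) (pow_nonneg hk 1),
  mul_nonneg (mul_nonneg (pow_nonneg hu 1) (pow_nonneg hi 3)) (pow_nonneg hk 0),
  mul_nonneg (mul_nonneg (pow_nonneg hu 2) (pow_nonneg hi 0)) (pow_nonneg hk 0),
  mul_nonneg (mul_nonneg (pow_nonneg hu 2) (pow_nonneg hi 0)) (pow_nonneg hk 1),
  mul_nonneg (mul_nonneg (pow_nonneg hu 2) (pow_nonneg hi 0)) (pow_nonneg hk 2),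
  mul_nonneg (mul_nonneg (pow_nonneg hu 2) (pow_nonneg hi 1)) (pow_nonneg hk 0),
  mul_nonneg (mul_nonneg (pow_nonneg hu 2) (pow_nonneg hi 1)) (pow_nonneg hk 1),
  mul_nonneg (mul_nonneg (pow_nonneg hu 2) (pow_nonneg hi 2)) (pow_nonneg hk 0),
  mul_nonneg (mul_nonneg (pow_nonneg hu 3) (pow_nonneg hi 0)) (pow_nonneg hk 0),
  mul_nonneg (mul_nonneg (pow_nonneg hu 3) (pow_nonneg hi 0)) (pow_nonneg hk 1),
  mul_nonneg (mul_nonneg (pow_nonneg hu 3) (pow_nonneg hi 1)) (pow_nonneg hk 0)]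

private lemma middle_ineq (A B W M : ℝ) (k : ℕ) (hA : 0 < A) (hB : 0 ≤ B)
    (hpoly : W*M*A^2 ≤ (A+2)*B*(A^2+2*(k:ℝ)*A+2*(k:ℝ)*((k:ℝ)-1))) :
    W*M*A^k ≤ (A+2)^(k+1)*B := by
  set x : ℝ := 2 / A with hxdef
  have hx : 0 ≤ x := by positivity
  have hxA : x * A = 2 := by
    rw [hxdef]
    field_simp
  have hkk : (0:ℝ) ≤ (k:ℝ) * ((k:ℝ) - 1) := by
    rcases Nat.eq_zero_or_pos k with h | h
    · subst h; norm_num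
    · have : (1:ℝ) ≤ (k:ℝ) := by exact_mod_cast h
      nlinarith
  have hS : (0:ℝ) < 1 + (k:ℝ)*x + (k:ℝ)*((k:ℝ)-1)/2*x^2 := by
    nlinarith [mul_nonneg (Nat.cast_nonneg (α := ℝ) k) hx, mul_nonneg hkk (sq_nonneg x)]
  have hbern := bern2 x hx k
  have h1 : A^k * (1 + (k:ℝ)*x + (k:ℝ)*((k:ℝ)-1)/2*x^2) ≤ (A+2)^k := by
    calc A^k * (1 + (k:ℝ)*x + (k:ℝ)*((k:ℝ)-1)/2*x^2) ≤ A^k * (1+x)^k :=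
          mul_le_mul_of_nonneg_left hbern (pow_nonneg hA.le k)
      _ = (A*(1+x))^k := by rw [mul_pow]
      _ = (A+2)^k := by rw [show A*(1+x) = A+2 by linear_combination hxA]
  have h3 : (1 + (k:ℝ)*x + (k:ℝ)*((k:ℝ)-1)/2*x^2) * A^2 = A^2 + 2*(k:ℝ)*A + 2*(k:ℝ)*((k:ℝ)-1) := by
    linear_combination ((k:ℝ)*A + (k:ℝ)*((k:ℝ)-1)/2*(x*A+2)) * hxA
  have h4 : W*M ≤ (A+2)*B*(1 + (k:ℝ)*x + (k:ℝ)*((k:ℝ)-1)/2*x^2) := by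
    have hA2 : (0:ℝ) < A^2 := by positivity
    have := calc W*M*A^2 ≤ (A+2)*B*(A^2+2*(k:ℝ)*A+2*(k:ℝ)*((k:ℝ)-1)) := hpoly
      _ = (A+2)*B*((1 + (k:ℝ)*x + (k:ℝ)*((k:ℝ)-1)/2*x^2) * A^2) := by rw [h3]
      _ = ((A+2)*B*(1 + (k:ℝ)*x + (k:ℝ)*((k:ℝ)-1)/2*x^2)) * A^2 := by ring
    exact le_of_mul_le_mul_right this hA2
  calc W*M*A^k ≤ ((A+2)*B*(1 + (k:ℝ)*x + (k:ℝ)*((k:ℝ)-1)/2*x^2)) * A^k :=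
        mul_le_mul_of_nonneg_right h4 (pow_nonneg hA.le k)
    _ = (A+2)*B*(A^k * (1 + (k:ℝ)*x + (k:ℝ)*((k:ℝ)-1)/2*x^2)) := by ring
    _ ≤ (A+2)*B*(A+2)^k := by
        apply mul_le_mul_of_nonneg_left h1
        have : (0:ℝ) ≤ A + 2 := by linarith
        exact mul_nonneg this hB
    _ = (A+2)^(k+1)*B := by ring

private lemma mid_combine (W Mr X A B : ℝ) (i k : ℕ) (hX0 : 0 ≤ X) (hWM : 0 ≤ W*Mr)
    (hB : 0 ≤ B) (hA : 0 ≤ A)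
    (hIH : X ≤ A^k * B^i) (hmid : W*Mr*A^k ≤ (A+2)^(k+1)*B) :
    W*Mr*X ≤ (A+2)^(k+1)*B^(i+1) := by
  calc W*Mr*X ≤ W*Mr*(A^k*B^i) := mul_le_mul_of_nonneg_left hIH hWM
    _ = (W*Mr*A^k)*B^i := by ring
    _ ≤ ((A+2)^(k+1)*B)*B^i := mul_le_mul_of_nonneg_right hmid (pow_nonneg hB i)
    _ = (A+2)^(k+1)*B^(i+1) := by ring

private lemma key : ∀ d w j : ℕ, j ≤ d → d ≤ w →
    ((Nat.descFactorial w j : ℕ) : ℝ) * ((Nat.descFactorial (w + d - 2*j) (d - j) : ℕ) : ℝ)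
      ≤ ((w : ℝ) + (d : ℝ)/2 + 1/2)^(d-j) * ((w : ℝ) - (d : ℝ)/2 + 3/2)^j := by
  intro d
  induction d using Nat.strong_induction_on with
  | _ d IH =>
    match d, IH with
    | 0, _ =>
      intro w j hj hw
      interval_cases j
      simp
    | 1, _ =>
      intro w j hj hw
      interval_cases j
      · simp [Nat.descFactorial_one]
        push_cast
        linarith
      · have h1 : w + 1 - 2*1 = w - 1 := by omega
        simp [Nat.descFactorial_one, h1]
        push_cast
        linarith
    | (e+2), IH =>
      intro w j hj hw
      rcases Nat.eq_zero_or_pos j with hj0 | hj1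
      · -- j = 0 case
        subst hj0
        have hsub : w + (e+2) - 2*0 = (w+e+1) + 1 := by omega
        have hsub2 : e + 2 - 0 = (e+1) + 1 := by omega
        rw [hsub, hsub2]
        have r1 : Nat.descFactorial ((w+e+1)+1) ((e+1)+1)
            = ((w+e+1)+1) * Nat.descFactorial (w+e+1) (e+1) :=
          Nat.succ_descFactorial_succ _ _
        have r2 : Nat.descFactorial (w+e+1) (e+1) = (w+e+1-e) * Nat.descFactorial (w+e+1) e :=
          Nat.descFactorial_succ _ _
        have hsub3 : w+e+1-e = w+1 := by omega
        rw [r1, r2, hsub3, Nat.descFactorial_zero]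
        have IHa := IH e (by omega) (w+1) 0 (by omega) (by omega)
        simp only [Nat.sub_zero, Nat.mul_zero, Nat.descFactorial_zero, Nat.cast_one, pow_zero,
          one_mul, mul_one] at IHa
        have hadd : w + 1 + e = w + e + 1 := by omega
        rw [hadd] at IHa
        push_cast at IHa
        have hS : ((w:ℝ)+1 + (e:ℝ)/2 + 1/2) = ((w:ℝ) + ((e:ℝ)+2)/2 + 1/2) := by ring
        rw [hS] at IHa
        simp only [pow_zero, mul_one, Nat.cast_mul, Nat.cast_one, Nat.cast_add,
          Nat.cast_ofNat, one_mul]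
        push_cast
        have hX0 : (0:ℝ) ≤ ((Nat.descFactorial (w+e+1) e : ℕ) : ℝ) := Nat.cast_nonneg _
        have hfac : ((w:ℝ)+(e:ℝ)+1+1)*((w:ℝ)+1) ≤ ((w:ℝ) + ((e:ℝ)+2)/2 + 1/2)^2 := by
          nlinarith [sq_nonneg ((e:ℝ)+1)]
        calc ((w:ℝ)+(e:ℝ)+1+1) * (((w:ℝ)+1) * ((Nat.descFactorial (w+e+1) e : ℕ) : ℝ))
            = (((w:ℝ)+(e:ℝ)+1+1)*((w:ℝ)+1)) * ((Nat.descFactorial (w+e+1) e : ℕ) : ℝ) := by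
              ring
          _ ≤ (((w:ℝ) + ((e:ℝ)+2)/2 + 1/2)^2) * (((w:ℝ) + ((e:ℝ)+2)/2 + 1/2)^e) :=
              mul_le_mul hfac IHa hX0 (by positivity)
          _ = ((w:ℝ) + ((e:ℝ)+2)/2 + 1/2)^(e+1+1) := by ring
      rcases eq_or_lt_of_le hj with hjd' | hjlt
      · -- j = d case
        subst hjd'
        obtain ⟨v, rfl⟩ : ∃ v, w = v + 1 := ⟨w - 1, by omega⟩
        have hsub : e + 2 - (e + 2) = 0 := by omega
        rw [hsub]
        have r1 : Nat.descFactorial (v+1) (e+2) = (v+1) * Nat.descFactorial v (e+1) := by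
          have := Nat.succ_descFactorial_succ v (e+1)
          simpa using this
        have r2 : Nat.descFactorial v (e+1) = (v - e) * Nat.descFactorial v e :=
          Nat.descFactorial_succ _ _
        rw [r1, r2, Nat.descFactorial_zero]
        have IHa := IH e (by omega) v e (le_refl e) (by omega)
        simp only [Nat.sub_self, Nat.descFactorial_zero, Nat.cast_one, pow_zero, mul_one,
          one_mul] at IHa
        have hve : e ≤ v := by omega
        have hX0 : (0:ℝ) ≤ ((Nat.descFactorial v e : ℕ) : ℝ) := Nat.cast_nonneg _
        push_cast [Nat.cast_sub hve]
        push_cast at IHa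
        have hbb : ((v:ℝ) - (e:ℝ)/2 + 3/2) = ((v:ℝ)+1 - ((e:ℝ)+2)/2 + 3/2) := by ring
        rw [hbb] at IHa
        have hve' : (e:ℝ) ≤ (v:ℝ) := by exact_mod_cast hve
        have hfac : ((v:ℝ)+1)*((v:ℝ)-(e:ℝ)) ≤ ((v:ℝ)+1 - ((e:ℝ)+2)/2 + 3/2)^2 := by
          nlinarith [sq_nonneg ((e:ℝ)+1)]
        calc ((v:ℝ)+1) * (((v:ℝ)-(e:ℝ)) * ((Nat.descFactorial v e : ℕ) : ℝ)) * 1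
            = (((v:ℝ)+1)*((v:ℝ)-(e:ℝ))) * ((Nat.descFactorial v e : ℕ) : ℝ) := by ring
          _ ≤ (((v:ℝ)+1 - ((e:ℝ)+2)/2 + 3/2)^2) * (((v:ℝ)+1 - ((e:ℝ)+2)/2 + 3/2)^e) :=
              mul_le_mul hfac IHa hX0 (sq_nonneg _)
          _ = 1 * ((v:ℝ)+1 - ((e:ℝ)+2)/2 + 3/2)^(e+2) := by ring
      · -- middle case: 1 <= j < e+2
        obtain ⟨i, rfl⟩ : ∃ i, j = i + 1 := ⟨j - 1, by omega⟩
        obtain ⟨v, rfl⟩ : ∃ v, w = v + 1 := ⟨w - 1, by omega⟩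
        have hie : i ≤ e := by omega
        have hev : e + 1 ≤ v := by omega
        have hsub1 : (e+2) - (i+1) = (e-i) + 1 := by omega
        have hsub2 : (v+1) + (e+2) - 2*(i+1) = (v+e-2*i) + 1 := by omega
        rw [hsub1, hsub2]
        have r1 : Nat.descFactorial (v+1) (i+1) = (v+1) * Nat.descFactorial v i :=
          Nat.succ_descFactorial_succ v i
        have r2 : Nat.descFactorial ((v+e-2*i)+1) ((e-i)+1)
            = ((v+e-2*i)+1) * Nat.descFactorial (v+e-2*i) (e-i) :=
          Nat.succ_descFactorial_succ _ _
        rw [r1, r2, Nat.cast_mul, Nat.cast_mul]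
        have h2i : 2*i ≤ v + e := by omega
        have hev' : (e:ℝ) + 1 ≤ (v:ℝ) := by exact_mod_cast hev
        have hie' : (i:ℝ) ≤ (e:ℝ) := by exact_mod_cast hie
        have IHa := IH e (by omega) v i hie (by omega)
        have hApos : (0:ℝ) < (v:ℝ) + (e:ℝ)/2 + 1/2 := by positivity
        have hBpos : (0:ℝ) < (v:ℝ) - (e:ℝ)/2 + 3/2 := by linarith
        have hX0 : (0:ℝ) ≤ ((Nat.descFactorial v i : ℕ) : ℝ)
            * ((Nat.descFactorial (v+e-2*i) (e-i) : ℕ) : ℝ) := by positivity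
        have hWM : (0:ℝ) ≤ (((v+1 : ℕ)) : ℝ) * ((((v+e-2*i)+1 : ℕ)) : ℝ) := by positivity
        have hR := R2lem ((v:ℝ) - (e:ℝ) - 1) (i:ℝ) ((e:ℝ) - (i:ℝ))
          (by linarith) (Nat.cast_nonneg i) (by linarith)
        have hpoly : (((v+1 : ℕ)) : ℝ) * ((((v+e-2*i)+1 : ℕ)) : ℝ) * ((v:ℝ) + (e:ℝ)/2 + 1/2)^2
            ≤ (((v:ℝ) + (e:ℝ)/2 + 1/2)+2) * ((v:ℝ) - (e:ℝ)/2 + 3/2)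
              * (((v:ℝ) + (e:ℝ)/2 + 1/2)^2 + 2*((e-i : ℕ):ℝ)*((v:ℝ) + (e:ℝ)/2 + 1/2)
                + 2*((e-i : ℕ):ℝ)*(((e-i : ℕ):ℝ)-1)) := by
          push_cast [Nat.cast_sub hie, Nat.cast_sub h2i]
          nlinarith [hR]
        have hmid := middle_ineq ((v:ℝ) + (e:ℝ)/2 + 1/2) ((v:ℝ) - (e:ℝ)/2 + 3/2)
          (((v+1 : ℕ)) : ℝ) ((((v+e-2*i)+1 : ℕ)) : ℝ) (e-i) hApos hBpos.le hpoly
        have hcomb := mid_combine (((v+1 : ℕ)) : ℝ) ((((v+e-2*i)+1 : ℕ)) : ℝ)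
          (((Nat.descFactorial v i : ℕ) : ℝ) * ((Nat.descFactorial (v+e-2*i) (e-i) : ℕ) : ℝ))
          ((v:ℝ) + (e:ℝ)/2 + 1/2) ((v:ℝ) - (e:ℝ)/2 + 3/2) i (e-i)
          hX0 hWM hBpos.le hApos.le IHa hmid
        have hbase1 : ((v:ℝ) + (e:ℝ)/2 + 1/2) + 2 = (((v+1:ℕ)):ℝ) + ((e+2:ℕ):ℝ)/2 + 1/2 := by
          push_cast; ring
        have hbase2 : ((v:ℝ) - (e:ℝ)/2 + 3/2) = (((v+1:ℕ)):ℝ) - ((e+2:ℕ):ℝ)/2 + 3/2 := by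
          push_cast; ring
        rw [hbase1, hbase2] at hcomb
        calc (((v+1:ℕ)):ℝ) * ((Nat.descFactorial v i : ℕ) : ℝ)
              * (((((v+e-2*i)+1 : ℕ)):ℝ) * ((Nat.descFactorial (v+e-2*i) (e-i) : ℕ) : ℝ))
            = (((v+1:ℕ)):ℝ) * ((((v+e-2*i)+1 : ℕ)):ℝ)
              * (((Nat.descFactorial v i : ℕ):ℝ)
                * ((Nat.descFactorial (v+e-2*i) (e-i) : ℕ):ℝ)) := by ring
          _ ≤ _ := hcomb

theorem stmt_5 (w d j : ℕ) (hjd : j ≤ d) (hdw : d ≤ w) (hd : 1 ≤ d) :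
    ((Nat.choose w j * Nat.choose (w + d - 2 * j) (d - j) : ℕ) : ℝ)
      ≤ ((w : ℝ) + (d : ℝ) / 2 + 1 / 2) ^ (d - j) * ((w : ℝ) - (d : ℝ) / 2 + 3 / 2) ^ j
          / ((Nat.factorial j : ℝ) * (Nat.factorial (d - j) : ℝ)) := by
  have h := key d w j hjd hdw
  rw [le_div_iff₀ (by positivity)]
  calc ((Nat.choose w j * Nat.choose (w + d - 2 * j) (d - j) : ℕ) : ℝ)
        * ((Nat.factorial j : ℝ) * (Nat.factorial (d - j) : ℝ))
      = ((Nat.descFactorial w j : ℕ) : ℝ) * ((Nat.descFactorial (w + d - 2*j) (d - j) : ℕ) : ℝ) := by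
        rw [Nat.descFactorial_eq_factorial_mul_choose, Nat.descFactorial_eq_factorial_mul_choose]
        push_cast
        ring
    _ ≤ _ := h
end

section
/- For natural numbers $w \geq d \geq 0$, one has $\sum_{j=0}^{d} \binom{w}{j}\binom{w + d - 2j}{d - j} \leq \frac{2^d (w+1)^d}{d!}$, with the right-hand side interpreted as a rational number. -/
open Finset

lemma amgm_prod_le_one (n : ℕ) (y : ℕ → ℝ)
    (h0 : ∀ i ∈ Finset.range n, 0 ≤ y i)
    (hs : ∑ i ∈ Finset.range n, y i ≤ n) :
    ∏ i ∈ Finset.range n, y i ≤ 1 := by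
  rcases Nat.eq_zero_or_pos n with hn | hn
  · simp [hn]
  have hn' : (0:ℝ) < n := by exact_mod_cast hn
  have hw1 : ∑ _i ∈ Finset.range n, (n:ℝ)⁻¹ = 1 := by
    simp [Finset.sum_const, Finset.card_range]
    field_simp
  have h := Real.geom_mean_le_arith_mean_weighted (Finset.range n)
    (fun _ => (n:ℝ)⁻¹) y (fun i _ => by positivity) hw1 h0
  rw [Real.finset_prod_rpow _ _ h0] at h
  have h2 : ∑ i ∈ Finset.range n, (n:ℝ)⁻¹ * y i ≤ 1 := by
    rw [← Finset.mul_sum, inv_mul_le_iff₀ hn', mul_one]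
    exact hs
  have h3 : (∏ i ∈ Finset.range n, y i) ^ ((n:ℝ)⁻¹) ≤ 1 := le_trans h h2
  have hp : 0 ≤ ∏ i ∈ Finset.range n, y i := Finset.prod_nonneg h0
  calc ∏ i ∈ Finset.range n, y i
      = ((∏ i ∈ Finset.range n, y i) ^ ((n:ℝ)⁻¹)) ^ (n:ℕ) := by
        rw [← Real.rpow_natCast (_ ^ _) n, ← Real.rpow_mul hp,
          inv_mul_cancel₀ (ne_of_gt hn'), Real.rpow_one]
    _ ≤ 1 := pow_le_one₀ (Real.rpow_nonneg hp _) h3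

lemma gauss_real (j : ℕ) : (∑ i ∈ Finset.range j, (i:ℝ)) * 2 = (j:ℝ)^2 - j := by
  induction j with
  | zero => simp
  | succ n ih => rw [Finset.sum_range_succ]; push_cast; ring_nf; ring_nf at ih; linarith

-- the key linear inequality for the AM-GM step
lemma star_ineq (x u v : ℝ) (hu : 0 ≤ u) (hv : 0 ≤ v) (hx : u + v ≤ x) :
    (u * x - (u^2 - u)/2) * ((2*x + (u+v) + 1)/2)
      + ((2*x - (u+v) + 3)/2) * (v * (x + (u+v) - 2*u) - (v^2 - v)/2)
      ≤ (u + v) * (((2*x - (u+v) + 3)/2) * ((2*x + (u+v) + 1)/2)) := by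
  nlinarith [mul_nonneg hu hv, mul_nonneg (mul_nonneg hu hv) hv,
    mul_nonneg (mul_nonneg hu hu) hv, mul_nonneg (mul_nonneg hu hv) (sub_nonneg.mpr hx),
    mul_nonneg hu (sub_nonneg.mpr hx), mul_nonneg hv (sub_nonneg.mpr hx),
    mul_nonneg (mul_nonneg hu hu) (sub_nonneg.mpr hx),
    mul_nonneg (mul_nonneg hv hv) (sub_nonneg.mpr hx),
    mul_nonneg (mul_nonneg hv hv) hu]

lemma term_bound (w d j : ℕ) (hj : j ≤ d) (hdw : d ≤ w) :
    ((w.descFactorial j : ℕ) : ℝ) * (((w + d - 2*j).descFactorial (d - j) : ℕ) : ℝ)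
      ≤ ((2*(w:ℝ) - d + 3)/2)^j * ((2*(w:ℝ) + d + 1)/2)^(d-j) := by
  obtain ⟨k, rfl⟩ : ∃ k, d = j + k := ⟨d - j, (Nat.add_sub_cancel' hj).symm⟩
  simp only [Nat.add_sub_cancel_left]
  have hwd : ((j:ℝ) + k) ≤ w := by exact_mod_cast hdw
  have hj0 : (0:ℝ) ≤ j := by positivity
  have hk0 : (0:ℝ) ≤ k := by positivity
  have hB0 : (0:ℝ) < (2*(w:ℝ) - (j+k) + 3)/2 := by linarith
  have hA0 : (0:ℝ) < (2*(w:ℝ) + (j+k) + 1)/2 := by linarith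
  have hm : ((w + (j + k) - 2*j : ℕ) : ℝ) = (w:ℝ) + ((j:ℝ)+k) - 2*j := by
    have h2 : 2*j ≤ w + (j + k) := by omega
    rw [Nat.cast_sub h2]; push_cast; ring
  have P1 : ((w.descFactorial j : ℕ) : ℝ) = ∏ i ∈ Finset.range j, ((w:ℝ) - i) := by
    rw [Nat.descFactorial_eq_prod_range, Nat.cast_prod]
    refine Finset.prod_congr rfl fun i hi => ?_
    have : i ≤ w := le_trans (Nat.le_of_lt (Finset.mem_range.mp hi)) (hj.trans hdw)
    rw [Nat.cast_sub this]
  have P2 : (((w + (j+k) - 2*j).descFactorial k : ℕ) : ℝ)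
      = ∏ i ∈ Finset.range k, ((w:ℝ) + ((j:ℝ)+k) - 2*j - i) := by
    rw [Nat.descFactorial_eq_prod_range, Nat.cast_prod]
    refine Finset.prod_congr rfl fun i hi => ?_
    have hi' : i < k := Finset.mem_range.mp hi
    have h3 : i ≤ w + (j+k) - 2*j := by omega
    rw [Nat.cast_sub h3, hm]
  set f : ℕ → ℝ := fun i => if i < j then ((w:ℝ) - i)/((2*(w:ℝ) - (j+k) + 3)/2)
    else ((w:ℝ) + ((j:ℝ)+k) - 2*j - ((i - j : ℕ) : ℝ))/((2*(w:ℝ) + (j+k) + 1)/2) with hf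
  have hf1 : ∀ i ∈ Finset.range j, f i = ((w:ℝ) - i)/((2*(w:ℝ) - (j+k) + 3)/2) := by
    intro i hi
    simp only [hf, Finset.mem_range.mp hi, if_true]
  have hf2 : ∀ i ∈ Finset.range k,
      f (j + i) = ((w:ℝ) + ((j:ℝ)+k) - 2*j - i)/((2*(w:ℝ) + (j+k) + 1)/2) := by
    intro i hi
    have : ¬ (j + i < j) := by omega
    simp only [hf, this, if_false, Nat.add_sub_cancel_left]
  have hnonneg : ∀ i ∈ Finset.range (j + k), 0 ≤ f i := by
    intro i hi
    have hi' : i < j + k := Finset.mem_range.mp hi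
    rw [hf]
    by_cases h : i < j
    · simp only [h, if_true]
      have : (i:ℝ) ≤ w := by exact_mod_cast (by omega : i ≤ w)
      exact div_nonneg (by linarith) hB0.le
    · simp only [h, if_false]
      have h1 : (i - j : ℕ) < k := by omega
      have h2 : ((i - j : ℕ) : ℝ) ≤ (k:ℝ) - 1 := by
        have : ((i - j : ℕ) : ℝ) + 1 ≤ k := by exact_mod_cast h1
        linarith
      exact div_nonneg (by linarith) hA0.le
  have S1 : ∑ i ∈ Finset.range j, ((w:ℝ) - i) = j * w - ((j:ℝ)^2 - j)/2 := by
    rw [Finset.sum_sub_distrib, Finset.sum_const, Finset.card_range, nsmul_eq_mul]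
    have := gauss_real j
    linarith
  have S2 : ∑ i ∈ Finset.range k, ((w:ℝ) + ((j:ℝ)+k) - 2*j - (i:ℝ))
      = k * ((w:ℝ) + ((j:ℝ)+k) - 2*j) - ((k:ℝ)^2 - k)/2 := by
    rw [Finset.sum_sub_distrib, Finset.sum_const, Finset.card_range, nsmul_eq_mul]
    have := gauss_real k
    linarith
  have hsum : ∑ i ∈ Finset.range (j + k), f i ≤ ((j + k : ℕ) : ℝ) := by
    rw [Finset.sum_range_add, Finset.sum_congr rfl hf1, Finset.sum_congr rfl hf2,
      ← Finset.sum_div, ← Finset.sum_div, S1, S2]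
    push_cast
    rw [div_add_div _ _ (ne_of_gt hB0) (ne_of_gt hA0), div_le_iff₀ (by positivity)]
    have := star_ineq (w:ℝ) (j:ℝ) (k:ℝ) hj0 hk0 hwd
    linarith
  have hprod := amgm_prod_le_one (j + k) f hnonneg hsum
  have e1 : ∏ i ∈ Finset.range j, f i
      = (∏ i ∈ Finset.range j, ((w:ℝ) - i)) / ((2*(w:ℝ) - (j+k) + 3)/2)^j := by
    rw [Finset.prod_congr rfl hf1, Finset.prod_div_distrib, Finset.prod_const,
      Finset.card_range]
  have e2 : ∏ i ∈ Finset.range k, f (j + i)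
      = (∏ i ∈ Finset.range k, ((w:ℝ) + ((j:ℝ)+k) - 2*j - i))
        / ((2*(w:ℝ) + (j+k) + 1)/2)^k := by
    rw [Finset.prod_congr rfl hf2, Finset.prod_div_distrib, Finset.prod_const,
      Finset.card_range]
  rw [Finset.prod_range_add, e1, e2] at hprod
  rw [P1, P2]
  push_cast at hprod ⊢
  have hBj : (0:ℝ) < ((2*(w:ℝ) - ((j:ℝ)+k) + 3)/2)^j := by positivity
  have hAk : (0:ℝ) < ((2*(w:ℝ) + ((j:ℝ)+k) + 1)/2)^k := by positivity
  set Q1 := ∏ i ∈ Finset.range j, ((w:ℝ) - i)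
  set Q2 := ∏ i ∈ Finset.range k, ((w:ℝ) + ((j:ℝ)+k) - 2*j - i)
  calc Q1 * Q2
      = (Q1 / ((2*(w:ℝ) - ((j:ℝ)+k) + 3)/2)^j * (Q2 / ((2*(w:ℝ) + ((j:ℝ)+k) + 1)/2)^k))
        * (((2*(w:ℝ) - ((j:ℝ)+k) + 3)/2)^j * ((2*(w:ℝ) + ((j:ℝ)+k) + 1)/2)^k) := by
        rw [div_mul_div_comm, div_mul_cancel₀ _ (ne_of_gt (mul_pos hBj hAk))]
    _ ≤ 1 * (((2*(w:ℝ) - ((j:ℝ)+k) + 3)/2)^j * ((2*(w:ℝ) + ((j:ℝ)+k) + 1)/2)^k) := by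
        exact mul_le_mul_of_nonneg_right hprod (by positivity)
    _ = ((2*(w:ℝ) - ((j:ℝ)+k) + 3)/2)^j * ((2*(w:ℝ) + ((j:ℝ)+k) + 1)/2)^k := one_mul _


theorem stmt_7 (w d : ℕ) (hdw : d ≤ w) :
    ((∑ j ∈ Finset.range (d + 1),
        Nat.choose w j * Nat.choose (w + d - 2 * j) (d - j) : ℕ) : ℚ)
      ≤ 2 ^ d * ((w : ℚ) + 1) ^ d / (Nat.factorial d : ℚ) := by
  have key : (∑ j ∈ Finset.range (d + 1),
      Nat.choose w j * Nat.choose (w + d - 2 * j) (d - j)) * d.factorial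
      ≤ 2 ^ d * (w + 1) ^ d := by
    rw [← @Nat.cast_le ℝ]
    push_cast
    rw [Finset.sum_mul]
    calc ∑ j ∈ Finset.range (d + 1),
          ((w.choose j : ℝ) * ((w + d - 2*j).choose (d - j) : ℝ)) * (d.factorial : ℝ)
        ≤ ∑ j ∈ Finset.range (d + 1),
          ((2*(w:ℝ) - d + 3)/2)^j * ((2*(w:ℝ) + d + 1)/2)^(d-j) * (d.choose j : ℝ) := by
          apply Finset.sum_le_sum
          intro j hj
          have hjd : j ≤ d := Nat.lt_succ_iff.mp (Finset.mem_range.mp hj)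
          have hfac : (d.choose j) * j.factorial * (d - j).factorial = d.factorial :=
            Nat.choose_mul_factorial_mul_factorial hjd
          have htb := term_bound w d j hjd hdw
          rw [Nat.descFactorial_eq_factorial_mul_choose,
            Nat.descFactorial_eq_factorial_mul_choose] at htb
          push_cast at htb
          have heq : ((w.choose j : ℝ) * ((w + d - 2*j).choose (d - j) : ℝ)) * (d.factorial : ℝ)
              = (d.choose j : ℝ) * (((j.factorial : ℝ) * (w.choose j : ℝ))
                * (((d - j).factorial : ℝ) * ((w + d - 2*j).choose (d - j) : ℝ))) := by
            rw [← hfac]; push_cast; ring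
          rw [heq, mul_comm (((2*(w:ℝ) - d + 3)/2)^j * ((2*(w:ℝ) + d + 1)/2)^(d-j))]
          exact mul_le_mul_of_nonneg_left htb (by positivity)
      _ = (((2*(w:ℝ) - d + 3)/2) + ((2*(w:ℝ) + d + 1)/2))^d := (add_pow _ _ _).symm
      _ = 2 ^ d * ((w:ℝ) + 1) ^ d := by
          have h2 : ((2*(w:ℝ) - d + 3)/2) + ((2*(w:ℝ) + d + 1)/2) = 2*((w:ℝ)+1) := by ring
          rw [h2, mul_pow]
  rw [le_div_iff₀ (show (0:ℚ) < (Nat.factorial d : ℚ) by positivity)]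
  exact_mod_cast key
end

section
/- Let $\sigma$ be a character of a two-letter alphabet and let $w \geq d \geq 1$. The condensed $d$-neighborhood of the unary word $\sigma^w$ has exactly $\binom{w}{d}$ elements. -/
/-- Costs for the Levenshtein distance (as in Mathlib's former `Mathlib.Data.List.EditDistance.Defs`). -/
structure Levenshtein.Cost (α β δ : Type*) where
  delete : α → δ
  insert : β → δ
  substitute : α → β → δ

namespace Levenshtein

def defaultCost {α : Type*} [DecidableEq α] : Cost α α ℕ where
  delete _ := 1
  insert _ := 1
  substitute a b := if a = b then 0 else 1

def impl {α β δ : Type*} [AddZeroClass δ] [Min δ] (C : Cost α β δ)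
    (xs : List α) (y : β) (d : {r : List δ // 0 < r.length}) : {r : List δ // 0 < r.length} :=
  let ⟨ds, w⟩ := d
  xs.zip (ds.zip ds.tail) |>.foldr
    (init := ⟨[C.insert y + ds.getLast (List.ne_nil_of_length_pos w)], by simp⟩)
    (fun ⟨x, d₀, d₁⟩ ⟨r, w⟩ =>
      ⟨min (C.delete x + r[0]) (min (C.insert y + d₀) (C.substitute x y + d₁)) :: r, by simp⟩)

end Levenshtein

def suffixLevenshtein {α β δ : Type*} [AddZeroClass δ] [Min δ] (C : Levenshtein.Cost α β δ)
    (xs : List α) (ys : List β) : {r : List δ // 0 < r.length} :=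
  ys.foldr
    (Levenshtein.impl C xs)
    (xs.foldr (init := ⟨[0], by simp⟩) (fun a ⟨r, w⟩ => ⟨(C.delete a + r[0]) :: r, by simp⟩))

def levenshtein {α β δ : Type*} [AddZeroClass δ] [Min δ] (C : Levenshtein.Cost α β δ)
    (xs : List α) (ys : List β) : δ :=
  let ⟨r, w⟩ := suffixLevenshtein C xs ys
  r[0]

theorem lev_impl_cons {α β δ : Type*} [AddZeroClass δ] [Min δ] (C : Levenshtein.Cost α β δ)
    (x : α) (xs : List α) (y : β) (d : δ) (ds : List δ) (w : 0 < (d :: ds).length)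
    (w' : 0 < List.length ds) :
    (Levenshtein.impl C (x :: xs) y ⟨d :: ds, w⟩).1 =
      min (C.delete x + (Levenshtein.impl C xs y ⟨ds, w'⟩).1[0]'(Levenshtein.impl C xs y ⟨ds, w'⟩).2)
        (min (C.insert y + d) (C.substitute x y + ds[0])) ::
        (Levenshtein.impl C xs y ⟨ds, w'⟩).1 :=
  match ds, w' with | _ :: _, _ => rfl

theorem lev_impl_length {α β δ : Type*} [AddZeroClass δ] [Min δ] (C : Levenshtein.Cost α β δ)
    (xs : List α) (y : β) (d : {r : List δ // 0 < r.length}) (w : d.1.length = xs.length + 1) :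
    (Levenshtein.impl C xs y d).1.length = xs.length + 1 := by
  induction xs generalizing d with
  | nil => rfl
  | cons x xs ih =>
    match d, w with
    | ⟨d₁ :: d₂ :: ds, _⟩, w =>
      rw [lev_impl_cons C x xs y d₁ (d₂ :: ds) (by simp) (by simp)]
      simp only [List.length_cons]
      congr 1
      exact ih ⟨d₂ :: ds, (by simp)⟩ (by simpa using w)

theorem lev_suffix_length {α β δ : Type*} [AddZeroClass δ] [Min δ] (C : Levenshtein.Cost α β δ)
    (xs : List α) (ys : List β) :
    (suffixLevenshtein C xs ys).1.length = xs.length + 1 := by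
  induction ys with
  | nil =>
    dsimp [suffixLevenshtein]
    induction xs with
    | nil => rfl
    | cons _ xs ih =>
      simp_all
  | cons y ys ih =>
    dsimp [suffixLevenshtein]
    rw [lev_impl_length]
    exact ih

theorem lev_suffix_cons₁ {α β δ : Type*} [AddZeroClass δ] [Min δ] (C : Levenshtein.Cost α β δ)
    (x : α) (xs : List α) (ys : List β) :
    (suffixLevenshtein C (x :: xs) ys).1 =
      levenshtein C (x :: xs) ys :: (suffixLevenshtein C xs ys).1 := by
  induction ys with
  | nil => rfl
  | cons y ys ih =>
    have e : suffixLevenshtein C (x :: xs) (y :: ys) =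
        Levenshtein.impl C (x :: xs) y (suffixLevenshtein C (x :: xs) ys) := rfl
    have e2 : suffixLevenshtein C xs (y :: ys) =
        Levenshtein.impl C xs y (suffixLevenshtein C xs ys) := rfl
    have hl : levenshtein C (x :: xs) (y :: ys) =
        (suffixLevenshtein C (x :: xs) (y :: ys)).1[0]'(suffixLevenshtein C (x :: xs) (y :: ys)).2 := rfl
    rw [hl]
    generalize hS : suffixLevenshtein C (x :: xs) ys = S at e ih
    obtain ⟨l, hlpos⟩ := S
    simp only at ih
    subst ih
    have h := lev_impl_cons C x xs y _ _ hlpos (suffixLevenshtein C xs ys).2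
    rw [e2]
    simp only [e, h, List.getElem_cons_zero]

theorem levenshtein_cons_cons {α β δ : Type*} [AddZeroClass δ] [Min δ] (C : Levenshtein.Cost α β δ)
    (x : α) (xs : List α) (y : β) (ys : List β) :
    levenshtein C (x :: xs) (y :: ys) =
      min (C.delete x + levenshtein C xs (y :: ys))
        (min (C.insert y + levenshtein C (x :: xs) ys)
          (C.substitute x y + levenshtein C xs ys)) := by
  have hl : levenshtein C (x :: xs) (y :: ys) =
      (suffixLevenshtein C (x :: xs) (y :: ys)).1[0]'(suffixLevenshtein C (x :: xs) (y :: ys)).2 := rfl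
  have e : suffixLevenshtein C (x :: xs) (y :: ys) =
      Levenshtein.impl C (x :: xs) y (suffixLevenshtein C (x :: xs) ys) := rfl
  have e2 : suffixLevenshtein C xs (y :: ys) =
      Levenshtein.impl C xs y (suffixLevenshtein C xs ys) := rfl
  have h1 := lev_suffix_cons₁ C x xs ys
  rw [hl]
  generalize hS : suffixLevenshtein C (x :: xs) ys = S at e h1
  obtain ⟨l, hlpos⟩ := S
  simp only at h1
  subst h1
  have h := lev_impl_cons C x xs y _ _ hlpos (suffixLevenshtein C xs ys).2
  simp only [e, h, List.getElem_cons_zero]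
  rfl

@[simp] theorem levenshtein_nil_nil {α β δ : Type*} [AddZeroClass δ] [Min δ]
    (C : Levenshtein.Cost α β δ) : levenshtein C ([] : List α) ([] : List β) = 0 := rfl

@[simp] theorem levenshtein_cons_nil {α β δ : Type*} [AddZeroClass δ] [Min δ]
    (C : Levenshtein.Cost α β δ) (x : α) (xs : List α) :
    levenshtein C (x :: xs) ([] : List β) = C.delete x + levenshtein C xs [] := rfl

@[simp] theorem levenshtein_nil_cons {α β δ : Type*} [AddZeroClass δ] [Min δ]
    (C : Levenshtein.Cost α β δ) (y : β) (ys : List β) :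
    levenshtein C ([] : List α) (y :: ys) = C.insert y + levenshtein C [] ys := by
  have e : suffixLevenshtein C ([] : List α) (y :: ys) =
      Levenshtein.impl C [] y (suffixLevenshtein C [] ys) := rfl
  have hl := lev_suffix_length C ([] : List α) ys
  have h0 : levenshtein C ([] : List α) ys =
      (suffixLevenshtein C ([] : List α) ys).1[0]'(suffixLevenshtein C ([] : List α) ys).2 := rfl
  have h1 : levenshtein C ([] : List α) (y :: ys) =
      (suffixLevenshtein C ([] : List α) (y :: ys)).1[0]'(suffixLevenshtein C ([] : List α) (y :: ys)).2 := rfl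
  rw [h1, h0]
  generalize hS : suffixLevenshtein C ([] : List α) ys = S at e hl
  obtain ⟨l, hlpos⟩ := S
  simp only [e]
  rcases l with _ | ⟨a, _ | ⟨b, l⟩⟩
  · simp at hlpos
  · rfl
  · simp at hl


@[simp] theorem lev_defaultCost_delete {α : Type*} [DecidableEq α] (a : α) :
    (Levenshtein.defaultCost : Levenshtein.Cost α α ℕ).delete a = 1 := rfl

@[simp] theorem lev_defaultCost_insert {α : Type*} [DecidableEq α] (a : α) :
    (Levenshtein.defaultCost : Levenshtein.Cost α α ℕ).insert a = 1 := rfl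

@[simp] theorem lev_defaultCost_substitute {α : Type*} [DecidableEq α] (a b : α) :
    (Levenshtein.defaultCost : Levenshtein.Cost α α ℕ).substitute a b = if a = b then 0 else 1 := rfl

open List in
theorem lev_unary {α : Type*} [DecidableEq α] (σ : α) :
    ∀ (U : List α) (w : ℕ),
      levenshtein Levenshtein.defaultCost U (List.replicate w σ) =
        max U.length w - min (U.count σ) w := by
  intro U
  induction U with
  | nil =>
    intro w
    induction w with
    | zero => simp
    | succ w ihw => simp [List.replicate_succ, ihw]; omega
  | cons x xs ih =>
    intro w
    induction w with
    | zero =>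
      have h0 := ih 0
      simp only [List.replicate_zero] at h0
      simp [h0]; omega
    | succ w ihw =>
      rw [List.replicate_succ, levenshtein_cons_cons]
      rw [show (σ :: List.replicate w σ) = List.replicate (w+1) σ from (List.replicate_succ ..).symm,
        ih (w+1), ihw, ih w]
      have h1 : xs.count σ ≤ xs.length := List.count_le_length
      simp only [Levenshtein.defaultCost, List.length_cons, List.count_cons,
        List.length_replicate]
      by_cases hx : x = σ <;> simp [hx] <;> omega

theorem mem_char {α : Type*} [DecidableEq α] (σ : α) (w d : ℕ) (hd : 1 ≤ d) (hdw : d ≤ w)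
    (U : List α) :
    (levenshtein Levenshtein.defaultCost U (List.replicate w σ) ≤ d ∧
        ∀ P : List α, P <+: U → P ≠ U →
          ¬ levenshtein Levenshtein.defaultCost P (List.replicate w σ) ≤ d) ↔
      (U.count σ = w - d ∧ U.length ≤ w ∧ (U = [] ∨ ∃ V, U = V ++ [σ])) := by
  constructor
  · rintro ⟨hfull, hpre⟩
    rw [lev_unary] at hfull
    rcases List.eq_nil_or_concat U with rfl | ⟨V, b, rfl⟩ <;>
      simp only [List.concat_eq_append] at *
    · simp at hfull ⊢
      omega
    · have hm : V.count σ ≤ V.length := List.count_le_length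
      have hnil := hpre [] List.nil_prefix (by simp)
      rw [lev_unary] at hnil
      simp only [List.length_nil, List.count_nil] at hnil
      have hV := hpre V (by simp) (by simp)
      rw [lev_unary] at hV
      simp only [List.count_append, List.length_append, List.count_singleton,
        List.length_singleton, List.count_cons, List.count_nil, List.length_cons,
        List.length_nil] at hfull
      simp only [List.count_append, List.length_append, List.count_singleton,
        List.length_singleton, List.count_cons, List.count_nil, List.length_cons,
        List.length_nil]
      by_cases hb : b = σ
      · subst hb
        simp only [beq_self_eq_true, if_pos] at hfull ⊢
        refine ⟨by omega, by omega, Or.inr ⟨V, rfl⟩⟩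
      · rw [if_neg (by simpa using hb)] at hfull
        exfalso
        have : max V.length w ≤ max (V.length + 1) w := by omega
        omega
  · rintro ⟨hcount, hlen, hend⟩
    have hm : U.count σ ≤ U.length := List.count_le_length
    constructor
    · rw [lev_unary]; omega
    · intro P hP hPne
      rw [lev_unary]
      have hPlen : P.length < U.length := by
        rcases Nat.lt_or_ge P.length U.length with h | h
        · exact h
        · exact absurd (List.IsPrefix.eq_of_length_le hP h) hPne
      rcases hend with rfl | ⟨V, rfl⟩
      · simp at hPlen
      · have hPV : P <+: V := by
          refine List.prefix_of_prefix_length_le hP (by simp) ?_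
          simp at hPlen ⊢; omega
        have hc : P.count σ ≤ V.count σ := hPV.sublist.count_le σ
        have hcV : V.count σ + 1 = w - d := by
          simpa [List.count_append] using hcount
        have : P.length ≤ V.length := hPV.length_le
        simp only [List.length_append, List.length_singleton] at hlen
        omega

lemma count_ofFn' {α : Type*} [DecidableEq α] (σ : α) : ∀ {n : ℕ} (g : Fin n → α),
    (List.ofFn g).count σ = (Finset.univ.filter fun i => g i = σ).card := by
  intro n
  induction n with
  | zero => intro g; rfl
  | succ n ih =>
    intro g
    rw [List.ofFn_succ, List.count_cons, ih]
    rw [Finset.card_filter, Finset.card_filter, Fin.sum_univ_succ]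
    simp only [beq_iff_eq]
    exact Nat.add_comm _ _

lemma rdrop_rtake {α : Type*} (p : α → Bool) (l : List α) :
    l.rdropWhile p ++ l.rtakeWhile p = l := by
  rw [List.rdropWhile, List.rtakeWhile, ← List.reverse_append, ← List.reverse_reverse l,
    List.reverse_inj, List.reverse_reverse, List.takeWhile_append_dropWhile]

lemma decomp_lemma {α : Type*} [DecidableEq α] {σ τ : α} (hall : ∀ x : α, x = σ ∨ x = τ)
    (l : List α) :
    l = l.rdropWhile (· != σ) ++ List.replicate (l.length - (l.rdropWhile (· != σ)).length) τ := by
  conv_lhs => rw [← rdrop_rtake (· != σ) l]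
  congr 1
  have hlen : (l.rtakeWhile (· != σ)).length = l.length - (l.rdropWhile (· != σ)).length := by
    have h2 := congrArg List.length (rdrop_rtake (· != σ) l)
    rw [List.length_append] at h2
    omega
  rw [List.eq_replicate_iff]
  refine ⟨hlen, fun x hx => ?_⟩
  have := List.mem_rtakeWhile_imp hx
  rcases hall x with rfl | rfl
  · simp at this
  · rfl

lemma strip_pad {α : Type*} [DecidableEq α] {σ τ : α} (hτ : τ ≠ σ) (U : List α)
    (hend : U = [] ∨ ∃ V, U = V ++ [σ]) (k : ℕ) :
    (U ++ List.replicate k τ).rdropWhile (· != σ) = U := by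
  induction k with
  | zero =>
    simp only [List.replicate_zero, List.append_nil]
    rcases hend with rfl | ⟨V, rfl⟩
    · simp
    · exact List.rdropWhile_concat_neg _ _ σ (by simp)
  | succ k ih =>
    rw [List.replicate_succ' , ← List.append_assoc,
      List.rdropWhile_concat_pos _ _ τ (by simpa using hτ), ih]

theorem stmt_12 {α : Type*} [Fintype α] [DecidableEq α] (hcard : Fintype.card α = 2)
    (σ : α) (w d : ℕ) (hd : 1 ≤ d) (hdw : d ≤ w) :
    {U : List α | levenshtein Levenshtein.defaultCost U (List.replicate w σ) ≤ d ∧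
        ∀ P : List α, P <+: U → P ≠ U →
          ¬ levenshtein Levenshtein.defaultCost P (List.replicate w σ) ≤ d}.ncard
      = Nat.choose w d := by
  obtain ⟨τ, hτ⟩ : ∃ τ : α, τ ≠ σ :=
    Fintype.exists_ne_of_one_lt_card (by omega) σ
  have hall : ∀ x : α, x = σ ∨ x = τ := by
    intro x
    by_contra h
    push_neg at h
    have h3 : ({x, σ, τ} : Finset α).card = 3 := by
      rw [Finset.card_insert_of_notMem (by simp [h.1, h.2]),
        Finset.card_insert_of_notMem (by simp [Ne.symm hτ]), Finset.card_singleton]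
    have hle := (Finset.card_le_univ ({x, σ, τ} : Finset α)).trans_eq
      (Finset.card_univ.trans hcard)
    omega
  classical
  let build : Finset (Fin w) → List α := fun s =>
    ((List.ofFn fun i : Fin w => if i ∈ s then τ else σ).rdropWhile (· != σ))
  let F : Finset (Finset (Fin w)) := Finset.univ.powersetCard d
  -- counting σ's in the coded word
  have hfiltc : ∀ s : Finset (Fin w),
      (Finset.univ.filter fun i => (if i ∈ s then τ else σ) = σ) = sᶜ := by
    intro s
    ext i
    simp only [Finset.mem_filter, Finset.mem_compl, Finset.mem_univ, true_and]
    by_cases h : i ∈ s <;> simp [h, hτ]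
  have hcnt : ∀ s : Finset (Fin w),
      (List.ofFn fun i : Fin w => if i ∈ s then τ else σ).count σ = w - s.card := by
    intro s
    rw [count_ofFn', hfiltc s, Finset.card_compl, Fintype.card_fin]
  -- decomposition of the coded word
  have hdec : ∀ s : Finset (Fin w),
      (List.ofFn fun i : Fin w => if i ∈ s then τ else σ) =
        build s ++ List.replicate (w - (build s).length) τ := by
    intro s
    conv_lhs => rw [decomp_lemma hall (List.ofFn fun i : Fin w => if i ∈ s then τ else σ)]
    simp [build]
  have hendb : ∀ s : Finset (Fin w), build s = [] ∨ ∃ V, build s = V ++ [σ] := by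
    intro s
    rcases eq_or_ne (build s) [] with h | h
    · exact Or.inl h
    · refine Or.inr ⟨(build s).dropLast, ?_⟩
      have hlast := List.rdropWhile_last_not (· != σ)
        (List.ofFn fun i : Fin w => if i ∈ s then τ else σ) h
      have : (build s).getLast h = σ := by simpa using hlast
      conv_lhs => rw [← List.dropLast_append_getLast h, this]
  have hlenb : ∀ s : Finset (Fin w), (build s).length ≤ w := by
    intro s
    have := (List.rdropWhile_prefix (· != σ)
      (List.ofFn fun i : Fin w => if i ∈ s then τ else σ)).length_le
    simpa using this
  have hcntb : ∀ s : Finset (Fin w), (build s).count σ = w - s.card := by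
    intro s
    have := hcnt s
    rw [hdec s, List.count_append] at this
    rw [List.count_replicate] at this
    simp only [beq_iff_eq, if_neg hτ, Nat.add_zero] at this
    exact this
  -- the set equality
  have hset : {U : List α | levenshtein Levenshtein.defaultCost U (List.replicate w σ) ≤ d ∧
        ∀ P : List α, P <+: U → P ≠ U →
          ¬ levenshtein Levenshtein.defaultCost P (List.replicate w σ) ≤ d} = build '' ↑F := by
    ext U
    rw [Set.mem_setOf_eq, mem_char σ w d hd hdw U]
    constructor
    · rintro ⟨hcount, hlen, hend⟩
      have hWlen : (U ++ List.replicate (w - U.length) τ).length = w := by simp; omega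
      set s : Finset (Fin w) := Finset.univ.filter
        (fun i : Fin w => (U ++ List.replicate (w - U.length) τ).getD i σ ≠ σ) with hs
      have hofn : (List.ofFn fun i : Fin w => if i ∈ s then τ else σ)
          = U ++ List.replicate (w - U.length) τ := by
        apply List.ext_getElem (by simpa using hWlen.symm)
        intro i h1 h2
        rw [List.getElem_ofFn]
        simp only [hs, Finset.mem_filter, Finset.mem_univ, true_and]
        rw [List.getD_eq_getElem _ _ (by omega)]
        rcases hall ((U ++ List.replicate (w - U.length) τ)[i]) with hx | hx
        · simp [hx]
        · simp [hx, hτ]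
      have hcW : (U ++ List.replicate (w - U.length) τ).count σ = w - d := by
        rw [List.count_append, List.count_replicate]
        simp only [beq_iff_eq, if_neg hτ, Nat.add_zero]
        exact hcount
      have hscard : s.card = d := by
        have h1 := hcnt s
        rw [hofn, hcW] at h1
        have h2 : s.card ≤ w := by
          have := Finset.card_le_univ s
          simpa using this
        omega
      refine ⟨s, ?_, ?_⟩
      · simpa [F, Finset.mem_powersetCard_univ] using hscard
      · show (List.ofFn fun i : Fin w => if i ∈ s then τ else σ).rdropWhile (· != σ) = U
        rw [hofn]
        exact strip_pad hτ U hend _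
    · rintro ⟨s, hsF, rfl⟩
      have hscard : s.card = d := by simpa [F, Finset.mem_powersetCard_univ] using hsF
      refine ⟨?_, ?_, hendb s⟩
      · rw [hcntb s, hscard]
      · exact hlenb s
  have hinj : Set.InjOn build ↑F := by
    intro s hs s' hs' heq
    have h1 := hdec s
    have h2 := hdec s'
    rw [heq] at h1
    have h3 : (List.ofFn fun i : Fin w => if i ∈ s then τ else σ)
        = List.ofFn fun i : Fin w => if i ∈ s' then τ else σ := by rw [h1, h2]
    have h4 := List.ofFn_injective h3
    ext i
    have h5 := congrFun h4 i
    constructor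
    · intro hi
      by_contra hi'
      simp only [if_pos hi, if_neg hi'] at h5
      exact hτ h5
    · intro hi'
      by_contra hi
      simp only [if_neg hi, if_pos hi'] at h5
      exact hτ h5.symm
  rw [hset, Set.ncard_image_of_injOn hinj, Set.ncard_coe_finset,
    Finset.card_powersetCard, Finset.card_univ, Fintype.card_fin]
end
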